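/- For any d ≥ 1, m ≥ 1, and base b ≥ 2, the number a_{b,d}(m) of admissible patterns of non-empty sub-cubes for (0,m,d)-nets in base b satisfies a_{b,d}(m) ≤ (b!)^{m·b^{m-1}·(d-1)}. -/

import Mathlib

open Finset

/-- `P` is a `(0,m,d)`-net in base `b`: a set of `b^m` points of `[0,1)^d` such that
every elementary interval of volume `b^{-m}` contains exactly one point of `P`. -/
def IsNet (b m d : ℕ) (P : Finset (Fin d → ℝ)) : Prop :=
  P.card = b ^ m ∧
  (∀ x ∈ P, ∀ j, x j ∈ Set.Ico (0 : ℝ) 1) ∧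
  ∀ c : Fin d → ℕ, (∑ j, c j) = m →
    ∀ a : Fin d → ℕ, (∀ j, a j < b ^ c j) →
      ∃! x, x ∈ P ∧ ∀ j, (a j : ℝ) / (b : ℝ) ^ c j ≤ x j ∧ x j < ((a j : ℝ) + 1) / (b : ℝ) ^ c j

/-- The index of the sub-cube of side `b^{-m}` containing the point `x`. -/
noncomputable def cubeIdx (b m d : ℕ) (x : Fin d → ℝ) : Fin d → ℕ :=
  fun j => (⌊(b : ℝ) ^ m * x j⌋).toNat

/-- A pattern `S` of sub-cubes (of side `b^{-m}`) is admissible if some `(0,m,d)`-net in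
base `b` has exactly one point in each sub-cube of `S` and no point elsewhere. -/
def Admissible (b m d : ℕ) (S : Finset (Fin d → ℕ)) : Prop :=
  ∃ P : Finset (Fin d → ℝ), IsNet b m d P ∧ S = P.image (cubeIdx b m d) ∧ S.card = b ^ m

/-- `a_{b,d}(m)`: the number of admissible patterns. -/
noncomputable def patternCount (b d m : ℕ) : ℕ := Set.ncard {S | Admissible b m d S}


lemma idx_lt (b m : ℕ) (hb : 0 < b) {y : ℝ} (h0 : 0 ≤ y) (h1 : y < 1) :
    (⌊(b : ℝ) ^ m * y⌋).toNat < b ^ m := by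
  have hB : (0:ℝ) < (b:ℝ) ^ m := by positivity
  have : (b:ℝ) ^ m * y < (b:ℝ) ^ m := by nlinarith
  have h2 : ⌊(b : ℝ) ^ m * y⌋ < (b ^ m : ℕ) := by
    rw [Int.floor_lt]; push_cast; linarith
  have h3 : 0 < b ^ m := Nat.pow_pos hb
  omega

lemma idx_eq_iff (b m : ℕ) (hb : 0 < b) {y : ℝ} (h0 : 0 ≤ y) (h1 : y < 1)
    {c a : ℕ} (hc : c ≤ m) (ha : a < b ^ c) :
    ((a : ℝ) / (b : ℝ) ^ c ≤ y ∧ y < ((a : ℝ) + 1) / (b : ℝ) ^ c) ↔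
      (⌊(b : ℝ) ^ m * y⌋).toNat / b ^ (m - c) = a := by
  have hbR : (0:ℝ) < (b:ℝ) := by exact_mod_cast hb
  have hcR : (0:ℝ) < (b:ℝ) ^ c := by positivity
  have hdR : (0:ℝ) < (b:ℝ) ^ (m - c) := by positivity
  have hsplit : (b:ℝ) ^ m = (b:ℝ) ^ c * (b:ℝ) ^ (m - c) := by
    rw [← pow_add]; congr 1; omega
  have hz0 : (0:ℝ) ≤ (b:ℝ) ^ m * y := by positivity
  have hfl0 : 0 ≤ ⌊(b : ℝ) ^ m * y⌋ := Int.floor_nonneg.mpr hz0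
  set z : ℝ := (b:ℝ) ^ m * y with hzdef
  set i : ℕ := (⌊z⌋).toNat with hidef
  have hiz : (i : ℤ) = ⌊z⌋ := Int.toNat_of_nonneg hfl0
  have hile : (i : ℝ) ≤ z := by
    have := Int.floor_le z
    rw [← hiz] at this; exact_mod_cast this
  have hilt : z < (i : ℝ) + 1 := by
    have := Int.lt_floor_add_one z
    rw [← hiz] at this; exact_mod_cast this
  have hBpos : 0 < b ^ (m - c) := Nat.pow_pos hb
  have hBR : ((b ^ (m - c) : ℕ) : ℝ) = (b:ℝ) ^ (m - c) := by push_cast; ring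
  constructor
  · rintro ⟨hl, hr⟩
    have hl' : (a : ℝ) ≤ (b:ℝ) ^ c * y := by
      rwa [div_le_iff₀ hcR, mul_comm] at hl
    have hr' : (b:ℝ) ^ c * y < (a:ℝ) + 1 := by
      rwa [lt_div_iff₀ hcR, mul_comm] at hr
    have h1' : ((a * b ^ (m - c) : ℕ) : ℝ) ≤ z := by
      push_cast; rw [hzdef, hsplit]; nlinarith
    have h2' : z < (((a + 1) * b ^ (m - c) : ℕ) : ℝ) := by
      push_cast; rw [hzdef, hsplit]; nlinarith
    have h1n : a * b ^ (m - c) ≤ i := by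
      have : ((a * b ^ (m - c) : ℕ) : ℤ) ≤ ⌊z⌋ := Int.le_floor.mpr (by exact_mod_cast h1')
      omega
    have h2n : i < (a + 1) * b ^ (m - c) := by
      have : ⌊z⌋ < ((a + 1) * b ^ (m - c) : ℕ) := Int.floor_lt.mpr (by exact_mod_cast h2')
      omega
    exact Nat.div_eq_of_lt_le h1n h2n
  · intro hdiv
    have h1n : a * b ^ (m - c) ≤ i := by
      rw [← hdiv]; exact Nat.div_mul_le_self _ _
    have h2n : i < (a + 1) * b ^ (m - c) := by
      rw [← hdiv]; exact (Nat.div_lt_iff_lt_mul hBpos).mp (Nat.lt_succ_self _)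
    have h1' : ((a : ℝ) * (b:ℝ) ^ (m - c)) ≤ z := by
      calc ((a : ℝ) * (b:ℝ) ^ (m - c)) = ((a * b ^ (m - c) : ℕ) : ℝ) := by push_cast; ring
        _ ≤ (i : ℝ) := by exact_mod_cast h1n
        _ ≤ z := hile
    have h2' : z < ((a : ℝ) + 1) * (b:ℝ) ^ (m - c) := by
      calc z < (i : ℝ) + 1 := hilt
        _ ≤ (((a + 1) * b ^ (m - c) : ℕ) : ℝ) := by exact_mod_cast h2n
        _ = ((a : ℝ) + 1) * (b:ℝ) ^ (m - c) := by push_cast; ring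
    rw [hzdef, hsplit] at h1' h2'
    constructor
    · rw [div_le_iff₀ hcR]; nlinarith
    · rw [lt_div_iff₀ hcR]; nlinarith


def NetIdx (b m d : ℕ) (S : Finset (Fin d → ℕ)) : Prop :=
  (∀ s ∈ S, ∀ j, s j < b ^ m) ∧
  ∀ c : Fin d → ℕ, (∑ j, c j) = m →
    ∀ a : Fin d → ℕ, (∀ j, a j < b ^ c j) →
      ∃! s, s ∈ S ∧ ∀ j, s j / b ^ (m - c j) = a j

lemma netIdx_marg {b m d : ℕ} [NeZero d] {S : Finset (Fin d → ℕ)} (hb : 0 < b)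
    (N : NetIdx b m d S) {j : Fin d} (hj : j ≠ 0) {k : ℕ} (hk : k ≤ m)
    {a1 a2 : ℕ} (ha1 : a1 < b ^ k) (ha2 : a2 < b ^ (m - k)) :
    ∃! s, s ∈ S ∧ s 0 / b ^ (m - k) = a1 ∧ s j / b ^ k = a2 := by
  classical
  set c : Fin d → ℕ := fun j' => if j' = 0 then k else if j' = j then m - k else 0 with hc
  set a : Fin d → ℕ := fun j' => if j' = 0 then a1 else if j' = j then a2 else 0 with ha
  have hc0 : c 0 = k := by simp [hc]
  have hcj : c j = m - k := by simp [hc, hj]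
  have hsum : (∑ j', c j') = m := by
    have hsplit : ∀ j', c j' = (if j' = 0 then k else 0) + (if j' = j then m - k else 0) := by
      intro j'
      by_cases h0 : j' = 0
      · subst h0; simp [hc, (Ne.symm hj)]
      · by_cases hjj : j' = j <;> simp [hc, h0, hjj, hj]
    calc (∑ j', c j') = ∑ j', ((if j' = 0 then k else 0) + (if j' = j then m - k else 0)) :=
          Finset.sum_congr rfl (fun j' _ => hsplit j')
      _ = k + (m - k) := by
          rw [Finset.sum_add_distrib, Finset.sum_ite_eq' Finset.univ (0 : Fin d) (fun _ => k),
            Finset.sum_ite_eq' Finset.univ j (fun _ => m - k)]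
          simp
      _ = m := by omega
  have habd : ∀ j', a j' < b ^ c j' := by
    intro j'
    by_cases h0 : j' = 0
    · subst h0; simpa [ha, hc] using ha1
    · by_cases hjj : j' = j
      · subst hjj; simpa [ha, hc, h0] using ha2
      · simp [ha, hc, h0, hjj]
  obtain ⟨s, ⟨hsS, hsprop⟩, huniq⟩ := N.2 c hsum a habd
  have hred : ∀ s' : Fin d → ℕ, s' ∈ S →
      ((∀ j', s' j' / b ^ (m - c j') = a j') ↔
        (s' 0 / b ^ (m - k) = a1 ∧ s' j / b ^ k = a2)) := by
    intro s' hs'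
    constructor
    · intro hp
      refine ⟨?_, ?_⟩
      · have := hp 0; rwa [hc0, ha] at this
      · have := hp j
        rw [hcj, ha] at this
        simp [hj] at this
        rwa [Nat.sub_sub_self hk] at this
    · rintro ⟨h1, h2⟩ j'
      by_cases h0 : j' = 0
      · subst h0; rwa [hc0, ha]
      · by_cases hjj : j' = j
        · subst hjj
          rw [hcj, ha, Nat.sub_sub_self hk]
          simp [h0]
          exact h2
        · simp [hc, ha, h0, hjj]
          exact Or.inr (N.1 s' hs' j')
  refine ⟨s, ⟨hsS, (hred s hsS).mp hsprop⟩, ?_⟩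
  rintro s' ⟨hs'S, hp⟩
  exact huniq s' ⟨hs'S, (hred s' hs'S).mpr hp⟩

lemma netIdx_graph {b m d : ℕ} [NeZero d] {S : Finset (Fin d → ℕ)} (hb : 0 < b)
    (N : NetIdx b m d S) {i : ℕ} (hi : i < b ^ m) :
    ∃! s, s ∈ S ∧ s 0 = i := by
  classical
  set c : Fin d → ℕ := fun j' => if j' = 0 then m else 0 with hc
  set a : Fin d → ℕ := fun j' => if j' = 0 then i else 0 with ha
  have hsum : (∑ j', c j') = m := by
    rw [hc, Finset.sum_ite_eq' Finset.univ (0 : Fin d) (fun _ => m)]; simp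
  have habd : ∀ j', a j' < b ^ c j' := by
    intro j'
    by_cases h0 : j' = 0 <;> simp [ha, hc, h0]
    exact hi
  obtain ⟨s, ⟨hsS, hsprop⟩, huniq⟩ := N.2 c hsum a habd
  have hred : ∀ s' : Fin d → ℕ, s' ∈ S →
      ((∀ j', s' j' / b ^ (m - c j') = a j') ↔ s' 0 = i) := by
    intro s' hs'
    constructor
    · intro hp
      have := hp 0
      simpa [hc, ha] using this
    · intro h1 j'
      by_cases h0 : j' = 0
      · subst h0; simpa [hc, ha] using h1
      · simp [hc, ha, h0]
        exact Or.inr (N.1 s' hs' j')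
  refine ⟨s, ⟨hsS, (hred s hsS).mp hsprop⟩, ?_⟩
  rintro s' ⟨hs'S, hp⟩
  exact huniq s' ⟨hs'S, (hred s' hs'S).mpr hp⟩

lemma admissible_netIdx {b m d : ℕ} (hb : 0 < b) {S : Finset (Fin d → ℕ)}
    (h : Admissible b m d S) : NetIdx b m d S := by
  classical
  obtain ⟨P, ⟨hPcard, hPmem, hPnet⟩, hS, hScard⟩ := h
  have hinj : Set.InjOn (cubeIdx b m d) ↑P := by
    rw [← Finset.card_image_iff]
    rw [← hS, hScard, hPcard]
  constructor
  · intro s hs j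
    rw [hS] at hs
    obtain ⟨x, hxP, rfl⟩ := Finset.mem_image.mp hs
    exact idx_lt b m hb (hPmem x hxP j).1 (hPmem x hxP j).2
  · intro c hc a ha
    have hcle : ∀ j, c j ≤ m := by
      intro j
      rw [← hc]
      exact Finset.single_le_sum (fun _ _ => Nat.zero_le _) (Finset.mem_univ j)
    have key : ∀ x ∈ P,
        ((∀ j, (a j : ℝ) / (b : ℝ) ^ c j ≤ x j ∧ x j < ((a j : ℝ) + 1) / (b : ℝ) ^ c j) ↔
          (∀ j, cubeIdx b m d x j / b ^ (m - c j) = a j)) := by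
      intro x hxP
      exact forall_congr' fun j =>
        idx_eq_iff b m hb (hPmem x hxP j).1 (hPmem x hxP j).2 (hcle j) (ha j)
    obtain ⟨x, ⟨hxP, hxint⟩, huniq⟩ := hPnet c hc a ha
    refine ⟨cubeIdx b m d x, ⟨by rw [hS]; exact Finset.mem_image_of_mem _ hxP,
      (key x hxP).mp hxint⟩, ?_⟩
    rintro s ⟨hsS, hsprop⟩
    rw [hS] at hsS
    obtain ⟨x', hx'P, rfl⟩ := Finset.mem_image.mp hsS
    have : x' = x := huniq x' ⟨hx'P, (key x' hx'P).mpr hsprop⟩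
    rw [this]

open Classical in
noncomputable def permFn (b m d : ℕ) [NeZero d] (hb : 0 < b) (S : Finset (Fin d → ℕ))
    (j : Fin d) (k a1 u : ℕ) : Fin b → Fin b :=
  fun t => ⟨(if h : ∃! s, s ∈ S ∧ s 0 / b ^ (m - (k + 1)) = a1 * b + t.val ∧
      s j / b ^ (k + 1) = u then h.choose j / b ^ k else 0) % b, Nat.mod_lt _ hb⟩

lemma permFn_val {b m d : ℕ} [NeZero d] (hb : 0 < b) {S : Finset (Fin d → ℕ)}
    {j : Fin d} {k a1 u : ℕ} (t : Fin b)
    (hE : ∃! s, s ∈ S ∧ s 0 / b ^ (m - (k + 1)) = a1 * b + t.val ∧ s j / b ^ (k + 1) = u) :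
    (permFn b m d hb S j k a1 u t : ℕ) = (hE.choose j / b ^ k) % b := by
  simp only [permFn]
  rw [dif_pos hE]

lemma succ_bound {b k a1 t : ℕ} (ha1 : a1 < b ^ k) (ht : t < b) : a1 * b + t < b ^ (k + 1) := by
  calc a1 * b + t < (a1 + 1) * b := by rw [add_mul, one_mul]; omega
    _ ≤ b ^ k * b := Nat.mul_le_mul_right _ ha1
    _ = b ^ (k + 1) := (pow_succ b k).symm

lemma div_decomp {b : ℕ} (x k : ℕ) :
    x / b ^ k = b * (x / b ^ (k + 1)) + (x / b ^ k) % b := by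
  rw [pow_succ, ← Nat.div_div_eq_div_mul]
  exact (Nat.div_add_mod _ b).symm

lemma div_pred {m k : ℕ} (hk : k < m) (b x : ℕ) :
    x / b ^ (m - (k + 1)) / b = x / b ^ (m - k) := by
  rw [Nat.div_div_eq_div_mul, ← pow_succ, show m - (k + 1) + 1 = m - k from by omega]

lemma mul_add_div_self {b a1 t : ℕ} (hb : 0 < b) (ht : t < b) : (a1 * b + t) / b = a1 := by
  rw [add_comm, Nat.add_mul_div_right _ _ hb, Nat.div_eq_of_lt ht, Nat.zero_add]

lemma mul_bound {b m k u r : ℕ} (hk : k < m) (hu : u < b ^ (m - (k + 1))) (hr : r < b) :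
    b * u + r < b ^ (m - k) := by
  calc b * u + r < b * (u + 1) := by rw [mul_add, mul_one]; omega
    _ ≤ b * b ^ (m - (k + 1)) := Nat.mul_le_mul_left _ hu
    _ = b ^ (m - k) := by rw [← pow_succ', show m - (k + 1) + 1 = m - k from by omega]

lemma permFn_exists {b m d : ℕ} [NeZero d] {S : Finset (Fin d → ℕ)} (hb : 0 < b)
    (N : NetIdx b m d S) {j : Fin d} (hj : j ≠ 0) {k : ℕ} (hk : k < m)
    {a1 u t : ℕ} (ha1 : a1 < b ^ k) (hu : u < b ^ (m - (k + 1))) (ht : t < b) :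
    ∃! s, s ∈ S ∧ s 0 / b ^ (m - (k + 1)) = a1 * b + t ∧ s j / b ^ (k + 1) = u :=
  netIdx_marg hb N hj (by omega) (succ_bound ha1 ht) hu

lemma permFn_bij {b m d : ℕ} [NeZero d] {S : Finset (Fin d → ℕ)} (hb : 0 < b)
    (N : NetIdx b m d S) {j : Fin d} (hj : j ≠ 0) {k : ℕ} (hk : k < m)
    {a1 u : ℕ} (ha1 : a1 < b ^ k) (hu : u < b ^ (m - (k + 1))) :
    Function.Bijective (permFn b m d hb S j k a1 u) := by
  rw [← Finite.injective_iff_bijective]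
  intro t t' heq
  have hE := permFn_exists hb N hj hk ha1 hu t.isLt
  have hE' := permFn_exists hb N hj hk ha1 hu t'.isLt
  obtain ⟨hsS, hs0, hsj⟩ := hE.choose_spec.1
  obtain ⟨hs'S, hs'0, hs'j⟩ := hE'.choose_spec.1
  have hval : (hE.choose j / b ^ k) % b = (hE'.choose j / b ^ k) % b := by
    rw [← permFn_val hb t hE, ← permFn_val hb t' hE', heq]
  set r := (hE.choose j / b ^ k) % b with hr
  have hrb : r < b := Nat.mod_lt _ hb
  have hQ := netIdx_marg hb N hj (le_of_lt hk) ha1 (mul_bound hk hu hrb)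
  have hq1 : hE.choose = hQ.choose := by
    refine hQ.choose_spec.2 _ ⟨hsS, ?_, ?_⟩
    · rw [← div_pred hk, hs0, mul_add_div_self hb t.isLt]
    · rw [div_decomp (hE.choose j) k, hsj, ← hr]
  have hq2 : hE'.choose = hQ.choose := by
    refine hQ.choose_spec.2 _ ⟨hs'S, ?_, ?_⟩
    · rw [← div_pred hk, hs'0, mul_add_div_self hb t'.isLt]
    · rw [div_decomp (hE'.choose j) k, hs'j, ← hval]
  have hchoose : hE.choose = hE'.choose := by rw [hq1, hq2]
  have : a1 * b + t.val = a1 * b + t'.val := by rw [← hs0, ← hs'0, hchoose]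
  exact Fin.ext (by omega)

open Classical in
noncomputable def encode (b m d : ℕ) [NeZero d] (hb : 0 < b) (S : Finset (Fin d → ℕ)) :
    {j : Fin d // j ≠ 0} × Fin m × Fin (b ^ (m - 1)) → Equiv.Perm (Fin b) :=
  fun p =>
    if h : Function.Bijective (permFn b m d hb S p.1.1 p.2.1.1
        (p.2.2.1 / b ^ (m - (p.2.1.1 + 1))) (p.2.2.1 % b ^ (m - (p.2.1.1 + 1))))
    then Equiv.ofBijective _ h else 1

lemma encode_perm_eq {b m d : ℕ} [NeZero d] (hb : 0 < b) {S S' : Finset (Fin d → ℕ)}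
    (N : NetIdx b m d S) (N' : NetIdx b m d S')
    (he : encode b m d hb S = encode b m d hb S')
    {j : Fin d} (hj : j ≠ 0) {k : ℕ} (hk : k < m)
    {a1 u : ℕ} (ha1 : a1 < b ^ k) (hu : u < b ^ (m - (k + 1))) :
    permFn b m d hb S j k a1 u = permFn b m d hb S' j k a1 u := by
  have hBpos : 0 < b ^ (m - (k + 1)) := Nat.pow_pos hb
  have hnode : a1 * b ^ (m - (k + 1)) + u < b ^ (m - 1) := by
    calc a1 * b ^ (m - (k + 1)) + u < (a1 + 1) * b ^ (m - (k + 1)) := by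
          rw [add_mul, one_mul]; omega
      _ ≤ b ^ k * b ^ (m - (k + 1)) := Nat.mul_le_mul_right _ ha1
      _ = b ^ (m - 1) := by rw [← pow_add]; congr 1; omega
  have hdivnode : (a1 * b ^ (m - (k + 1)) + u) / b ^ (m - (k + 1)) = a1 := by
    rw [mul_comm, Nat.mul_add_div hBpos, Nat.div_eq_of_lt hu, Nat.add_zero]
  have hmodnode : (a1 * b ^ (m - (k + 1)) + u) % b ^ (m - (k + 1)) = u := by
    rw [mul_comm, Nat.mul_add_mod, Nat.mod_eq_of_lt hu]
  have hp := congrFun he (⟨j, hj⟩, ⟨k, hk⟩, ⟨a1 * b ^ (m - (k + 1)) + u, hnode⟩)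
  simp only [encode, hdivnode, hmodnode] at hp
  rw [dif_pos (permFn_bij hb N hj hk ha1 hu), dif_pos (permFn_bij hb N' hj hk ha1 hu)] at hp
  funext t
  calc permFn b m d hb S j k a1 u t
      = Equiv.ofBijective _ (permFn_bij hb N hj hk ha1 hu) t := rfl
    _ = Equiv.ofBijective _ (permFn_bij hb N' hj hk ha1 hu) t := by rw [hp]
    _ = permFn b m d hb S' j k a1 u t := rfl

lemma recon {b m d : ℕ} [NeZero d] (hb : 0 < b) {S S' : Finset (Fin d → ℕ)}
    (N : NetIdx b m d S) (N' : NetIdx b m d S')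
    (henc : ∀ (j : Fin d), j ≠ 0 → ∀ k, k < m → ∀ a1 u, a1 < b ^ k → u < b ^ (m - (k + 1)) →
      permFn b m d hb S j k a1 u = permFn b m d hb S' j k a1 u) : S ⊆ S' := by
  intro s hs
  have hib : s 0 < b ^ m := N.1 s hs 0
  obtain ⟨s', ⟨hs'S, hs'0⟩, -⟩ := netIdx_graph hb N' hib
  suffices hss : s = s' by rw [hss]; exact hs'S
  funext j
  by_cases hj : j = 0
  · subst hj; rw [hs'0]
  · have main : ∀ n, n ≤ m → s j / b ^ (m - n) = s' j / b ^ (m - n) := by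
      intro n
      induction n with
      | zero =>
        intro _
        rw [Nat.sub_zero, Nat.div_eq_of_lt (N.1 s hs j), Nat.div_eq_of_lt (N'.1 s' hs'S j)]
      | succ n ih =>
        intro hn1
        have hnm : n ≤ m := by omega
        set k := m - (n + 1) with hkdef
        have hk : k < m := by omega
        have hk1 : k + 1 = m - n := by omega
        have hu' : s' j / b ^ (k + 1) = s j / b ^ (k + 1) := by
          rw [hk1]; exact (ih hnm).symm
        have ha1 : s 0 / b ^ (m - k) < b ^ k := by
          rw [Nat.div_lt_iff_lt_mul (Nat.pow_pos hb), ← pow_add,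
            show k + (m - k) = m from by omega]
          exact hib
        have ht : (s 0 / b ^ (m - (k + 1))) % b < b := Nat.mod_lt _ hb
        have hu2 : s j / b ^ (k + 1) < b ^ (m - (k + 1)) := by
          rw [Nat.div_lt_iff_lt_mul (Nat.pow_pos hb), ← pow_add,
            show m - (k + 1) + (k + 1) = m from by omega]
          exact N.1 s hs j
        have hq : s 0 / b ^ (m - (k + 1)) =
            (s 0 / b ^ (m - k)) * b + (s 0 / b ^ (m - (k + 1))) % b := by
          have h1 := Nat.div_add_mod (s 0 / b ^ (m - (k + 1))) b
          rw [div_pred hk] at h1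
          rw [mul_comm] at h1
          exact h1.symm
        have hES := permFn_exists hb N hj hk ha1 hu2 ht
        have hsE : s = hES.choose := hES.choose_spec.2 s ⟨hs, hq, rfl⟩
        have hES' := permFn_exists hb N' hj hk ha1 hu2 ht
        have hs'E : s' = hES'.choose := by
          refine hES'.choose_spec.2 s' ⟨hs'S, ?_, hu'⟩
          rw [hs'0]; exact hq
        have hval := congrFun (henc j hj k hk _ _ ha1 hu2)
          ⟨(s 0 / b ^ (m - (k + 1))) % b, ht⟩
        have h1 := permFn_val hb (S := S) (j := j) (k := k)
          ⟨(s 0 / b ^ (m - (k + 1))) % b, ht⟩ hES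
        have h2 := permFn_val hb (S := S') (j := j) (k := k)
          ⟨(s 0 / b ^ (m - (k + 1))) % b, ht⟩ hES'
        have hmods : (s j / b ^ k) % b = (s' j / b ^ k) % b := by
          have := congrArg Fin.val hval
          rw [h1, h2, ← hsE, ← hs'E] at this
          exact this
        rw [div_decomp (s j) k, div_decomp (s' j) k, hu', hmods]
    have := main m le_rfl
    simpa using this


theorem stmt1 (b d m : ℕ) (hb : 2 ≤ b) (hd : 1 ≤ d) (hm : 1 ≤ m) :
    patternCount b d m ≤ (Nat.factorial b) ^ (m * b ^ (m - 1) * (d - 1)) := by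
  haveI : NeZero d := ⟨by omega⟩
  have hb0 : 0 < b := by omega
  have hinj : Set.InjOn (encode b m d hb0) {S | Admissible b m d S} := by
    intro S hS S' hS' he
    have N := admissible_netIdx hb0 hS
    have N' := admissible_netIdx hb0 hS'
    have henc : ∀ (j : Fin d), j ≠ 0 → ∀ k, k < m → ∀ a1 u, a1 < b ^ k →
        u < b ^ (m - (k + 1)) →
        permFn b m d hb0 S j k a1 u = permFn b m d hb0 S' j k a1 u :=
      fun j hj k hk a1 u ha1 hu => encode_perm_eq hb0 N N' he hj hk ha1 hu
    have henc' : ∀ (j : Fin d), j ≠ 0 → ∀ k, k < m → ∀ a1 u, a1 < b ^ k →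
        u < b ^ (m - (k + 1)) →
        permFn b m d hb0 S' j k a1 u = permFn b m d hb0 S j k a1 u :=
      fun j hj k hk a1 u ha1 hu => (henc j hj k hk a1 u ha1 hu).symm
    exact Finset.Subset.antisymm (recon hb0 N N' henc) (recon hb0 N' N henc')
  have hcount := Set.ncard_le_ncard_of_injOn (encode b m d hb0)
    (fun S _ => Set.mem_univ _) hinj Set.finite_univ
  rw [Set.ncard_univ, Nat.card_eq_fintype_card] at hcount
  have hcard : Fintype.card ({j : Fin d // j ≠ 0} × Fin m × Fin (b ^ (m - 1)) → Equiv.Perm (Fin b))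
      = (Nat.factorial b) ^ (m * b ^ (m - 1) * (d - 1)) := by
    rw [Fintype.card_fun, Fintype.card_perm, Fintype.card_fin, Fintype.card_prod,
      Fintype.card_prod, Fintype.card_fin, Fintype.card_fin]
    have hsub : Fintype.card {j : Fin d // j ≠ 0} = d - 1 := by
      simp only [ne_eq]
      rw [Fintype.card_subtype_compl, Fintype.card_fin, Fintype.card_subtype_eq]
    rw [hsub]; ring
  unfold patternCount
  calc Set.ncard {S | Admissible b m d S} ≤ Fintype.card _ := hcount
    _ = _ := hcard
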